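/- arXiv:2408.13982 — 3 statements merged into one kernel-verified Lean document; each statement's English description precedes it below -/
import Mathlib

section
/- Let Ω ⊆ ℝ² be open, let u, v : Ω → ℝ be C¹ functions whose gradients are everywhere parallel, i.e. (∂_y u)(∂_x v) = (∂_x u)(∂_y v) on Ω, and let p ∈ Ω be a point such that ∇u is nonvanishing on a neighborhood of p. Then there exist r > 0 with the ball B_r(p) ⊆ Ω and a single-variable function θ : ℝ → ℝ such that v = θ ∘ u on B_r(p). -/
open Real Set Metric
open Topology Filter

/-- Partial derivative in the first variable. -/
noncomputable def px (f : ℝ × ℝ → ℝ) : ℝ × ℝ → ℝ :=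
  fun p => deriv (fun t => f (t, p.2)) p.1

/-- Partial derivative in the second variable. -/
noncomputable def py (f : ℝ × ℝ → ℝ) : ℝ × ℝ → ℝ :=
  fun p => deriv (fun t => f (p.1, t)) p.2

/-- The linear equivalence `(x, y) ↦ (c x + d y, y)` for `c ≠ 0`. -/
noncomputable def Ecd (c d : ℝ) (hc : c ≠ 0) : (ℝ × ℝ) ≃L[ℝ] ℝ × ℝ :=
{ toFun := fun z => (c * z.1 + d * z.2, z.2)
  invFun := fun z => ((z.1 - d * z.2) / c, z.2)
  map_add' := by intro a b; ext <;> simp <;> ring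
  map_smul' := by intro m a; ext <;> simp <;> ring
  left_inv := by intro z; ext <;> field_simp <;> ring
  right_inv := by intro z; ext <;> field_simp <;> ring
  continuous_toFun := by fun_prop
  continuous_invFun := by fun_prop }

lemma Ecd_apply (c d : ℝ) (hc : c ≠ 0) (w : ℝ × ℝ) :
    Ecd c d hc w = (c * w.1 + d * w.2, w.2) := rfl

lemma Ecd_symm_apply (c d : ℝ) (hc : c ≠ 0) (w : ℝ × ℝ) :
    (Ecd c d hc).symm w = ((w.1 - d * w.2) / c, w.2) := rfl

lemma clm_decomp (L : ℝ × ℝ →L[ℝ] ℝ) (x y : ℝ) :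
    L (x, y) = x * L (1, 0) + y * L (0, 1) := by
  have h : (x, y) = x • ((1 : ℝ), (0 : ℝ)) + y • ((0 : ℝ), (1 : ℝ)) := by
    simp [Prod.ext_iff]
  rw [h, map_add, map_smul, map_smul, smul_eq_mul, smul_eq_mul]

lemma px_eq {u : ℝ × ℝ → ℝ} {L : ℝ × ℝ →L[ℝ] ℝ} {z : ℝ × ℝ}
    (h : HasFDerivAt u L z) : px u z = L (1, 0) := by
  have h1 : HasDerivAt (fun t : ℝ => (t, z.2)) ((1 : ℝ), (0 : ℝ)) z.1 :=
    (hasDerivAt_id z.1).prodMk (hasDerivAt_const z.1 z.2)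
  have h2 : HasFDerivAt u L (z.1, z.2) := by simpa using h
  have h3 := h2.comp_hasDerivAt z.1 h1
  exact h3.deriv

lemma py_eq {u : ℝ × ℝ → ℝ} {L : ℝ × ℝ →L[ℝ] ℝ} {z : ℝ × ℝ}
    (h : HasFDerivAt u L z) : py u z = L (0, 1) := by
  have h1 : HasDerivAt (fun t : ℝ => (z.1, t)) ((0 : ℝ), (1 : ℝ)) z.2 :=
    (hasDerivAt_const z.2 z.1).prodMk (hasDerivAt_id z.2)
  have h2 : HasFDerivAt u L (z.1, z.2) := by simpa using h
  have h3 := h2.comp_hasDerivAt z.2 h1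
  exact h3.deriv

/-- Key lemma: the case where `∂ₓ u` does not vanish at `p`. -/
lemma key_lemma (Ω : Set (ℝ × ℝ)) (hΩ : IsOpen Ω)
    (u v : ℝ × ℝ → ℝ)
    (hu : ContDiffOn ℝ 1 u Ω) (hv : ContDiffOn ℝ 1 v Ω)
    (hpar : ∀ p ∈ Ω, py u p * px v p = px u p * py v p)
    (p : ℝ × ℝ) (hp : p ∈ Ω) (hx : px u p ≠ 0) :
    ∃ r > 0, Metric.ball p r ⊆ Ω ∧
      ∃ θ : ℝ → ℝ, ∀ z ∈ Metric.ball p r, v z = θ (u z) := by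
  -- basic differentiability
  have hud : ∀ z ∈ Ω, HasFDerivAt u (fderiv ℝ u z) z := fun z hz =>
    ((hu.contDiffAt (hΩ.mem_nhds hz)).differentiableAt one_ne_zero).hasFDerivAt
  have hvd : ∀ z ∈ Ω, HasFDerivAt v (fderiv ℝ v z) z := fun z hz =>
    ((hv.contDiffAt (hΩ.mem_nhds hz)).differentiableAt one_ne_zero).hasFDerivAt
  -- continuity of px u, find δ-ball where px u ≠ 0
  have hcont : ContinuousAt (fun z => fderiv ℝ u z ((1 : ℝ), (0 : ℝ))) p :=
    ((hu.continuousOn_fderiv_of_isOpen hΩ le_rfl).clm_apply continuousOn_const).continuousAt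
      (hΩ.mem_nhds hp)
  have hne0 : fderiv ℝ u p ((1 : ℝ), (0 : ℝ)) ≠ 0 := by
    rw [← px_eq (hud p hp)]; exact hx
  have hev : ∀ᶠ z in 𝓝 p, fderiv ℝ u z ((1 : ℝ), (0 : ℝ)) ≠ 0 ∧ z ∈ Ω :=
    (hcont.eventually_ne hne0).and (hΩ.eventually_mem hp)
  obtain ⟨δ, hδ, hδball⟩ := Metric.eventually_nhds_iff_ball.mp hev
  have hδΩ : Metric.ball p δ ⊆ Ω := fun z hz => (hδball z hz).2
  have hδpx : ∀ z ∈ Metric.ball p δ, px u z ≠ 0 := fun z hz => by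
    rw [px_eq (hud z (hδΩ hz))]; exact (hδball z hz).1
  -- the straightening map g
  set g : ℝ × ℝ → ℝ × ℝ := fun z => (u z, z.2) with hg_def
  have hg : ∀ z (hz : z ∈ Ω) (hz0 : px u z ≠ 0),
      HasFDerivAt g ((Ecd (px u z) (py u z) hz0 : (ℝ × ℝ) ≃L[ℝ] ℝ × ℝ) :
        (ℝ × ℝ) →L[ℝ] ℝ × ℝ) z := by
    intro z hz hz0
    have h2 : HasFDerivAt (fun w : ℝ × ℝ => w.2) (ContinuousLinearMap.snd ℝ ℝ ℝ) z :=
      (ContinuousLinearMap.snd ℝ ℝ ℝ).hasFDerivAt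
    have h3 := (hud z hz).prodMk h2
    have heq : ((Ecd (px u z) (py u z) hz0 : (ℝ × ℝ) ≃L[ℝ] ℝ × ℝ) :
        (ℝ × ℝ) →L[ℝ] ℝ × ℝ) = (fderiv ℝ u z).prod (ContinuousLinearMap.snd ℝ ℝ ℝ) := by
      apply ContinuousLinearMap.ext
      intro w
      have : fderiv ℝ u z w = w.1 * fderiv ℝ u z (1, 0) + w.2 * fderiv ℝ u z (0, 1) := by
        simpa using clm_decomp (fderiv ℝ u z) w.1 w.2
      simp [Ecd_apply, px_eq (hud z hz), py_eq (hud z hz), this, Prod.ext_iff]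
      ring
    rw [heq]; exact h3
  -- strict derivative at p
  have hgstrict : HasStrictFDerivAt g
      ((Ecd (px u p) (py u p) hx : (ℝ × ℝ) ≃L[ℝ] ℝ × ℝ) : (ℝ × ℝ) →L[ℝ] ℝ × ℝ) p := by
    have hus : HasStrictFDerivAt u (fderiv ℝ u p) p :=
      (hu.contDiffAt (hΩ.mem_nhds hp)).hasStrictFDerivAt one_ne_zero
    have h2 : HasStrictFDerivAt (fun w : ℝ × ℝ => w.2) (ContinuousLinearMap.snd ℝ ℝ ℝ) p :=
      (ContinuousLinearMap.snd ℝ ℝ ℝ).hasStrictFDerivAt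
    have h3 := hus.prodMk h2
    have heq : ((Ecd (px u p) (py u p) hx : (ℝ × ℝ) ≃L[ℝ] ℝ × ℝ) :
        (ℝ × ℝ) →L[ℝ] ℝ × ℝ) = (fderiv ℝ u p).prod (ContinuousLinearMap.snd ℝ ℝ ℝ) := by
      apply ContinuousLinearMap.ext
      intro w
      have : fderiv ℝ u p w = w.1 * fderiv ℝ u p (1, 0) + w.2 * fderiv ℝ u p (0, 1) := by
        simpa using clm_decomp (fderiv ℝ u p) w.1 w.2
      simp [Ecd_apply, px_eq (hud p hp), py_eq (hud p hp), this, Prod.ext_iff]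
      ring
    rw [heq]; exact h3
  -- inverse function theorem
  set Φ := hgstrict.toOpenPartialHomeomorph g with hΦ_def
  have hΦcoe : (Φ : ℝ × ℝ → ℝ × ℝ) = g := hgstrict.toOpenPartialHomeomorph_coe
  have hpsource : p ∈ Φ.source := hgstrict.mem_toOpenPartialHomeomorph_source
  have hgptarget : g p ∈ Φ.target :=
    hgstrict.image_mem_toOpenPartialHomeomorph_target
  set Ψ : ℝ × ℝ → ℝ × ℝ := ⇑Φ.symm with hΨ_def
  -- an open neighborhood of g p inside target where Ψ lands in ball p δ ∩ source
  have hTopen : IsOpen (Φ.target ∩ Ψ ⁻¹' (Metric.ball p δ ∩ Φ.source)) :=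
    Φ.isOpen_inter_preimage_symm ((Metric.isOpen_ball).inter Φ.open_source)
  have hgpT : g p ∈ Φ.target ∩ Ψ ⁻¹' (Metric.ball p δ ∩ Φ.source) := by
    refine ⟨hgptarget, ?_⟩
    have : Ψ (g p) = p := by
      rw [hΨ_def, ← hΦcoe]; exact Φ.left_inv hpsource
    rw [mem_preimage, this]
    exact ⟨mem_ball_self hδ, hpsource⟩
  obtain ⟨s, hs, hsT⟩ := Metric.isOpen_iff.mp hTopen (g p) hgpT
  -- derivative of H := v ∘ Ψ on ball (g p) s : second partial is 0
  have hH : ∀ q ∈ Metric.ball (g p) s,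
      ∃ L : ℝ × ℝ →L[ℝ] ℝ, HasFDerivAt (fun w => v (Ψ w)) L q ∧ L (0, 1) = 0 := by
    intro q hq
    obtain ⟨hqt, hqpre⟩ := hsT hq
    rw [mem_preimage] at hqpre
    set w := Ψ q with hw_def
    have hwball : w ∈ Metric.ball p δ := hqpre.1
    have hwΩ : w ∈ Ω := hδΩ hwball
    have hw0 : px u w ≠ 0 := hδpx w hwball
    have hΨd : HasFDerivAt Ψ
        (((Ecd (px u w) (py u w) hw0).symm : (ℝ × ℝ) ≃L[ℝ] ℝ × ℝ) :
          (ℝ × ℝ) →L[ℝ] ℝ × ℝ) q := by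
      apply Φ.hasFDerivAt_symm hqt
      rw [hΦcoe]
      exact hg w hwΩ hw0
    have hvw : HasFDerivAt v (fderiv ℝ v w) w := hvd w hwΩ
    have hcomp := hvw.comp q hΨd
    refine ⟨_, hcomp, ?_⟩
    have hval : ((Ecd (px u w) (py u w) hw0).symm) ((0 : ℝ), (1 : ℝ)) =
        (-(py u w) / px u w, 1) := by
      rw [Ecd_symm_apply]; norm_num
    have hdec : fderiv ℝ v w (-(py u w) / px u w, 1) =
        (-(py u w) / px u w) * px v w + 1 * py v w := by
      rw [clm_decomp (fderiv ℝ v w), ← px_eq hvw, ← py_eq hvw]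
    have hpw := hpar w hwΩ
    simp only [ContinuousLinearMap.coe_comp', Function.comp_apply,
      ContinuousLinearEquiv.coe_coe, hval, hdec]
    field_simp
    linarith [hpw]
  -- small ball around p mapped by g into ball (g p) s, inside source and ball p δ
  have hgc : ContinuousAt g p := (hg p hp hx).continuousAt
  have hU : Φ.source ∩ Metric.ball p δ ∩ g ⁻¹' Metric.ball (g p) s ∈ 𝓝 p := by
    refine Filter.inter_mem (Filter.inter_mem ?_ ?_) ?_
    · exact Φ.open_source.mem_nhds hpsource
    · exact Metric.ball_mem_nhds p hδ
    · exact hgc (Metric.ball_mem_nhds (g p) hs)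
  obtain ⟨r, hr, hrball⟩ := Metric.mem_nhds_iff.mp hU
  refine ⟨r, hr, fun z hz => hδΩ (hrball hz).1.2, fun t => v (Ψ (t, p.2)), ?_⟩
  intro z hz
  obtain ⟨⟨hzsource, hzδ⟩, hzg⟩ := hrball hz
  rw [mem_preimage] at hzg
  -- v z = v (Ψ (g z)) = H (u z, z.2)
  have hlz : Ψ (g z) = z := by rw [hΨ_def, ← hΦcoe]; exact Φ.left_inv hzsource
  -- product structure of the ball around g p
  have hprod : Metric.ball (g p) s = Metric.ball (u p) s ×ˢ Metric.ball p.2 s := by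
    rw [ball_prod_same]
  have hzg' : u z ∈ Metric.ball (u p) s ∧ z.2 ∈ Metric.ball p.2 s := by
    have : g z ∈ Metric.ball (u p) s ×ˢ Metric.ball p.2 s := by rwa [← hprod]
    exact ⟨this.1, this.2⟩
  -- the function t ↦ v (Ψ (u z, t)) has zero derivative on ball p.2 s
  have hconst : v (Ψ (u z, z.2)) = v (Ψ (u z, p.2)) := by
    set φ : ℝ → ℝ := fun t => v (Ψ (u z, t)) with hφ_def
    have hφd : ∀ t ∈ Metric.ball p.2 s, HasDerivAt φ 0 t := by
      intro t ht
      have hmem : ((u z, t) : ℝ × ℝ) ∈ Metric.ball (g p) s := by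
        rw [hprod]; exact ⟨hzg'.1, ht⟩
      obtain ⟨L, hL, hL0⟩ := hH (u z, t) hmem
      have hι : HasDerivAt (fun t : ℝ => ((u z, t) : ℝ × ℝ)) ((0 : ℝ), (1 : ℝ)) t :=
        (hasDerivAt_const t (u z)).prodMk (hasDerivAt_id t)
      have := hL.comp_hasDerivAt t hι
      rwa [hL0] at this
    have hconv : Convex ℝ (Metric.ball p.2 s) := convex_ball p.2 s
    have hdiff : DifferentiableOn ℝ φ (Metric.ball p.2 s) := fun t ht =>
      (hφd t ht).differentiableAt.differentiableWithinAt
    have hzero : ∀ t ∈ Metric.ball p.2 s, fderivWithin ℝ φ (Metric.ball p.2 s) t = 0 := by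
      intro t ht
      rw [fderivWithin_of_isOpen Metric.isOpen_ball ht]
      have hf : HasFDerivAt φ (0 : ℝ →L[ℝ] ℝ) t := by
        have h := (hφd t ht).hasFDerivAt
        have : ContinuousLinearMap.toSpanSingleton ℝ (0 : ℝ) = 0 := by
          ext x; simp
        rwa [this] at h
      exact hf.fderiv
    exact hconv.is_const_of_fderivWithin_eq_zero hdiff hzero hzg'.2 (mem_ball_self hs)
  calc v z = v (Ψ (g z)) := by rw [hlz]
    _ = v (Ψ (u z, z.2)) := rfl
    _ = v (Ψ (u z, p.2)) := hconst

/-- two C¹ functions with everywhere parallel gradients are locally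
functionally dependent near a point where `∇u` does not vanish. -/
theorem parallel_gradients_functional_dependence
    (Ω : Set (ℝ × ℝ)) (hΩ : IsOpen Ω)
    (u v : ℝ × ℝ → ℝ)
    (hu : ContDiffOn ℝ 1 u Ω) (hv : ContDiffOn ℝ 1 v Ω)
    (hpar : ∀ p ∈ Ω, py u p * px v p = px u p * py v p)
    (p : ℝ × ℝ) (hp : p ∈ Ω)
    (hnz : ∃ ε > 0, Metric.ball p ε ⊆ Ω ∧
      ∀ z ∈ Metric.ball p ε, ¬(px u z = 0 ∧ py u z = 0)) :
    ∃ r > 0, Metric.ball p r ⊆ Ω ∧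
      ∃ θ : ℝ → ℝ, ∀ z ∈ Metric.ball p r, v z = θ (u z) := by
  obtain ⟨ε, hε, hballΩ, hne⟩ := hnz
  have hpmem : p ∈ Metric.ball p ε := mem_ball_self hε
  rcases not_and_or.mp (hne p hpmem) with h1 | h2
  · exact key_lemma Ω hΩ u v hu hv hpar p hp h1
  · -- swap coordinates
    set S : ℝ × ℝ → ℝ × ℝ := Prod.swap with hS_def
    have hScont : ContinuousAt S = ContinuousAt S := rfl
    have hScd : ContDiff ℝ 1 S := contDiff_snd.prodMk contDiff_fst
    set Ω' : Set (ℝ × ℝ) := S ⁻¹' Ω with hΩ'_def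
    have hΩ'open : IsOpen Ω' := hΩ.preimage continuous_swap
    set u' : ℝ × ℝ → ℝ := u ∘ S with hu'_def
    set v' : ℝ × ℝ → ℝ := v ∘ S with hv'_def
    have hu' : ContDiffOn ℝ 1 u' Ω' := hu.comp hScd.contDiffOn (fun z hz => hz)
    have hv' : ContDiffOn ℝ 1 v' Ω' := hv.comp hScd.contDiffOn (fun z hz => hz)
    have hpxu' : ∀ z, px u' z = py u (S z) := fun z => rfl
    have hpyu' : ∀ z, py u' z = px u (S z) := fun z => rfl
    have hpxv' : ∀ z, px v' z = py v (S z) := fun z => rfl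
    have hpyv' : ∀ z, py v' z = px v (S z) := fun z => rfl
    have hpar' : ∀ z ∈ Ω', py u' z * px v' z = px u' z * py v' z := by
      intro z hz
      rw [hpxu', hpyu', hpxv', hpyv']
      have := hpar (S z) hz
      linarith [this]
    have hSp : S p ∈ Ω' := by
      simp only [hΩ'_def, mem_preimage, hS_def, Prod.swap_swap]
      exact hp
    have hx' : px u' (S p) ≠ 0 := by
      rw [hpxu']
      simpa [hS_def, Prod.swap_swap] using h2
    obtain ⟨r, hr, hsub, θ, hθ⟩ :=
      key_lemma Ω' hΩ'open u' v' hu' hv' hpar' (S p) hSp hx'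
    have hdistS : ∀ z w : ℝ × ℝ, dist (S z) (S w) = dist z w := by
      intro z w
      simp only [hS_def, Prod.dist_eq, Prod.swap]
      exact max_comm _ _
    refine ⟨r, hr, ?_, θ, ?_⟩
    · intro z hz
      have hSz : S z ∈ Metric.ball (S p) r := by
        rw [Metric.mem_ball, hdistS]; exact hz
      have := hsub hSz
      simpa [hΩ'_def, hS_def, Prod.swap_swap] using this
    · intro z hz
      have hSz : S z ∈ Metric.ball (S p) r := by
        rw [Metric.mem_ball, hdistS]; exact hz
      have := hθ (S z) hSz
      simpa [hu'_def, hv'_def, hS_def, Prod.swap_swap] using this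
end

section
/- Let I, J ⊆ ℝ be open intervals, let a : I → ℝ and b : J → ℝ be continuous and nowhere vanishing, let c : I → ℝ be continuous, and let r : I × J → ℝ be a C¹ function satisfying a(x) ∂_x r(x,y) + b(y) ∂_y r(x,y) = c(x) for all (x,y) ∈ I × J. Let f : I → ℝ be an antiderivative of 1/a, let g : J → ℝ be an antiderivative of 1/b, and let C : I → ℝ be an antiderivative of c/a. Then there exists a single-variable function θ : ℝ → ℝ such that r(x,y) = θ(f(x) − g(y)) + C(x) for all (x,y) ∈ I × J. -/
open Real Set

/-- A continuous nonvanishing function on a convex set of reals has constant sign. -/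
lemma aux_sign_const {s : Set ℝ} (hconv : Convex ℝ s) {h : ℝ → ℝ}
    (hc : ContinuousOn h s) (h0 : ∀ x ∈ s, h x ≠ 0) :
    (∀ x ∈ s, 0 < h x) ∨ (∀ x ∈ s, h x < 0) := by
  by_contra hcon
  push_neg at hcon
  obtain ⟨⟨x₀, hx₀, hle₀⟩, ⟨x₁, hx₁, hle₁⟩⟩ := hcon
  have hsub : uIcc x₀ x₁ ⊆ s := hconv.ordConnected.uIcc_subset hx₀ hx₁
  have h0mem : (0 : ℝ) ∈ uIcc (h x₀) (h x₁) :=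
    mem_uIcc.2 (Or.inl ⟨hle₀, hle₁⟩)
  obtain ⟨z, hz, hz0⟩ := intermediate_value_uIcc (hc.mono hsub) h0mem
  exact h0 z (hsub hz) hz0

/-- A differentiable injective function with continuous nonvanishing derivative on an
open set has a global differentiable inverse. -/
lemma aux_global_inverse {J : Set ℝ} (hJ : IsOpen J) {g b' : ℝ → ℝ}
    (hg : ∀ y ∈ J, HasDerivAt g (b' y) y) (hb' : ContinuousOn b' J)
    (h0 : ∀ y ∈ J, b' y ≠ 0) (hinj : Set.InjOn g J) :
    ∃ G : ℝ → ℝ, ∀ y ∈ J, G (g y) = y ∧ HasDerivAt G (b' y)⁻¹ (g y) := by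
  refine ⟨Function.invFunOn g J, fun y hy => ?_⟩
  have hleft : ∀ z ∈ J, Function.invFunOn g J (g z) = z := fun z hz =>
    hinj.leftInvOn_invFunOn hz
  have hstrict : HasStrictDerivAt g (b' y) y :=
    hasStrictDerivAt_of_hasDerivAt_of_continuousAt
      (by filter_upwards [hJ.mem_nhds hy] with z hz using hg z hz)
      (hb'.continuousAt (hJ.mem_nhds hy))
  have hev : ∀ᶠ x in nhds y, Function.invFunOn g J (g x) = x := by
    filter_upwards [hJ.mem_nhds hy] with z hz using hleft z hz
  exact ⟨hleft y hy, (hstrict.to_local_left_inverse (h0 y hy) hev).hasDerivAt⟩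

/-- solutions of `a(x) ∂ₓr + b(y) ∂_y r = c(x)` on a product of open
intervals have the form `r = θ(f(x) − g(y)) + C(x)` where `f' = 1/a`, `g' = 1/b`,
`C' = c/a`. -/
theorem transport_equation_solution_form
    (I J : Set ℝ)
    (hI : IsOpen I) (hIconv : Convex ℝ I)
    (hJ : IsOpen J) (hJconv : Convex ℝ J)
    (a c : ℝ → ℝ) (b : ℝ → ℝ)
    (ha : ContinuousOn a I) (ha0 : ∀ x ∈ I, a x ≠ 0)
    (hb : ContinuousOn b J) (hb0 : ∀ y ∈ J, b y ≠ 0)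
    (hc : ContinuousOn c I)
    (r : ℝ × ℝ → ℝ) (hr : ContDiffOn ℝ 1 r (I ×ˢ J))
    (hpde : ∀ x ∈ I, ∀ y ∈ J, a x * px r (x, y) + b y * py r (x, y) = c x)
    (f g C : ℝ → ℝ)
    (hf : ∀ x ∈ I, HasDerivAt f (1 / a x) x)
    (hg : ∀ y ∈ J, HasDerivAt g (1 / b y) y)
    (hC : ∀ x ∈ I, HasDerivAt C (c x / a x) x) :
    ∃ θ : ℝ → ℝ, ∀ x ∈ I, ∀ y ∈ J, r (x, y) = θ (f x - g y) + C x := by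
  classical
  have hfc : ContinuousOn f I := fun x hx => (hf x hx).continuousAt.continuousWithinAt
  have hgc : ContinuousOn g J := fun y hy => (hg y hy).continuousAt.continuousWithinAt
  -- f maps intervals to intervals monotonically
  have hfmono : ∀ x₁ ∈ I, ∀ x₂ ∈ I, ∀ x ∈ Icc x₁ x₂, f x ∈ uIcc (f x₁) (f x₂) := by
    rcases aux_sign_const hIconv (continuousOn_const.div ha ha0)
        (fun x hx => one_div_ne_zero (ha0 x hx)) with hp | hn
    · have hm : StrictMonoOn f I := by
        apply strictMonoOn_of_deriv_pos hIconv hfc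
        intro x hx
        rw [hI.interior_eq] at hx
        rw [(hf x hx).deriv]
        exact hp x hx
      intro x₁ h1 x₂ h2 x hx
      have hxI : x ∈ I := hIconv.ordConnected.out h1 h2 hx
      exact mem_uIcc.2 (Or.inl ⟨hm.monotoneOn h1 hxI hx.1, hm.monotoneOn hxI h2 hx.2⟩)
    · have hm : StrictAntiOn f I := by
        apply strictAntiOn_of_deriv_neg hIconv hfc
        intro x hx
        rw [hI.interior_eq] at hx
        rw [(hf x hx).deriv]
        exact hn x hx
      intro x₁ h1 x₂ h2 x hx
      have hxI : x ∈ I := hIconv.ordConnected.out h1 h2 hx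
      exact mem_uIcc.2 (Or.inr ⟨hm.antitoneOn hxI h2 hx.2, hm.antitoneOn h1 hxI hx.1⟩)
  -- g is injective on J
  have hginj : Set.InjOn g J := by
    rcases aux_sign_const hJconv (continuousOn_const.div hb hb0)
        (fun y hy => one_div_ne_zero (hb0 y hy)) with hp | hn
    · refine (strictMonoOn_of_deriv_pos hJconv hgc fun y hy => ?_).injOn
      rw [hJ.interior_eq] at hy
      rw [(hg y hy).deriv]; exact hp y hy
    · refine (strictAntiOn_of_deriv_neg hJconv hgc fun y hy => ?_).injOn
      rw [hJ.interior_eq] at hy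
      rw [(hg y hy).deriv]; exact hn y hy
  -- global differentiable inverse of g
  obtain ⟨G, hG⟩ := aux_global_inverse hJ hg (continuousOn_const.div hb hb0)
    (fun y hy => one_div_ne_zero (hb0 y hy)) hginj
  -- key claim: r - C is constant along level sets of f x - g y
  have key : ∀ x₁ ∈ I, ∀ y₁ ∈ J, ∀ x₂ ∈ I, ∀ y₂ ∈ J, x₁ ≤ x₂ →
      f x₁ - g y₁ = f x₂ - g y₂ →
      r (x₁, y₁) - C x₁ = r (x₂, y₂) - C x₂ := by
    intro x₁ hx₁ y₁ hy₁ x₂ hx₂ y₂ hy₂ hle heq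
    have hgy₂ : g y₂ = g y₁ + (f x₂ - f x₁) := by linarith
    set Y : ℝ → ℝ := fun x => G (g y₁ + (f x - f x₁)) with hYdef
    have hIccI : Icc x₁ x₂ ⊆ I := hIconv.ordConnected.out hx₁ hx₂
    have huJ : uIcc y₁ y₂ ⊆ J := hJconv.ordConnected.uIcc_subset hy₁ hy₂
    have hY : ∀ x ∈ Icc x₁ x₂, Y x ∈ J ∧ g (Y x) = g y₁ + (f x - f x₁) ∧
        HasDerivAt Y (b (Y x) * (1 / a x)) x := by
      intro x hx
      have hxI : x ∈ I := hIccI hx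
      have htmem : g y₁ + (f x - f x₁) ∈ uIcc (g y₁) (g y₂) := by
        rcases mem_uIcc.1 (hfmono x₁ hx₁ x₂ hx₂ x hx) with ⟨h1, h2⟩ | ⟨h1, h2⟩ <;>
          [exact mem_uIcc.2 (Or.inl ⟨by linarith, by linarith⟩);
           exact mem_uIcc.2 (Or.inr ⟨by linarith, by linarith⟩)]
      obtain ⟨y, hyu, hgy⟩ := intermediate_value_uIcc (hgc.mono huJ) htmem
      have hyJ : y ∈ J := huJ hyu
      obtain ⟨hGy, hGd⟩ := hG y hyJ
      have hYx : Y x = y := by rw [hYdef]; simp only [← hgy, hGy]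
      have hgYx : g (Y x) = g y₁ + (f x - f x₁) := by rw [hYx, hgy]
      refine ⟨hYx ▸ hyJ, hgYx, ?_⟩
      have hinner : HasDerivAt (fun x => g y₁ + (f x - f x₁)) (1 / a x) x :=
        ((hf x hxI).sub_const _).const_add _
      have hGd' : HasDerivAt G ((1 / b y)⁻¹) (g y₁ + (f x - f x₁)) := by
        rwa [hgy] at hGd
      have hres : HasDerivAt Y ((1 / b y)⁻¹ * (1 / a x)) x := by
        simpa [hYdef, Function.comp_def] using hGd'.comp x hinner
      rw [hYx]
      simpa [one_div] using hres
    -- the function along the characteristic curve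
    set φ : ℝ → ℝ := fun x => r (x, Y x) - C x with hφdef
    have hφ : ∀ x ∈ Icc x₁ x₂, HasDerivAt φ 0 x := by
      intro x hx
      have hxI : x ∈ I := hIccI hx
      obtain ⟨hYJ, hgYx, hYd⟩ := hY x hx
      have hp : (x, Y x) ∈ I ×ˢ J := ⟨hxI, hYJ⟩
      have hdiff : DifferentiableAt ℝ r (x, Y x) :=
        ((hr.differentiableOn one_ne_zero) (x, Y x) hp).differentiableAt
          ((hI.prod hJ).mem_nhds hp)
      set L := fderiv ℝ r (x, Y x) with hLdef
      have hL : HasFDerivAt r L (x, Y x) := hdiff.hasFDerivAt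
      have hpx : px r (x, Y x) = L (1, 0) := by
        have h1 : HasDerivAt (fun t => r (t, Y x)) (L (1, 0)) x := by
          have := hL.comp_hasDerivAt (x := x)
            ((hasDerivAt_id x).prodMk (hasDerivAt_const x (Y x)))
          simpa [Function.comp_def] using this
        exact h1.deriv
      have hpy : py r (x, Y x) = L (0, 1) := by
        have h1 : HasDerivAt (fun t => r (x, t)) (L (0, 1)) (Y x) := by
          have := hL.comp_hasDerivAt (x := Y x)
            ((hasDerivAt_const (Y x) x).prodMk (hasDerivAt_id (Y x)))
          simpa [Function.comp_def] using this
        exact h1.deriv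
      have hcurve : HasDerivAt (fun x => r (x, Y x))
          (L (1, b (Y x) * (1 / a x))) x := by
        have := hL.comp_hasDerivAt (x := x) ((hasDerivAt_id x).prodMk hYd)
        simpa [Function.comp_def] using this
      have hsplit : L (1, b (Y x) * (1 / a x))
          = L (1, 0) + (b (Y x) * (1 / a x)) * L (0, 1) := by
        have h1 : ((1 : ℝ), b (Y x) * (1 / a x))
            = (1, 0) + (b (Y x) * (1 / a x)) • ((0 : ℝ), (1 : ℝ)) := by
          simp [Prod.ext_iff]
        rw [h1, map_add, map_smul]
        simp
      have hφd : HasDerivAt φ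
          (L (1, b (Y x) * (1 / a x)) - c x / a x) x := hcurve.sub (hC x hxI)
      have hpde' := hpde x hxI (Y x) hYJ
      rw [hpx, hpy] at hpde'
      have hzero : L (1, b (Y x) * (1 / a x)) - c x / a x = 0 := by
        have hax := ha0 x hxI
        rw [hsplit]
        field_simp
        linear_combination hpde'
      rwa [hzero] at hφd
    have hconst : φ x₂ = φ x₁ := by
      have := constant_of_has_deriv_right_zero
        (f := φ) (a := x₁) (b := x₂)
        (fun x hx => (hφ x hx).continuousAt.continuousWithinAt)
        (fun x hx => (hφ x (Ico_subset_Icc_self hx)).hasDerivWithinAt)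
      exact this x₂ (right_mem_Icc.2 hle)
    have hY₁ : Y x₁ = y₁ := by
      have : g y₁ + (f x₁ - f x₁) = g y₁ := by ring
      rw [hYdef]; simp only [this, (hG y₁ hy₁).1]
    have hY₂ : Y x₂ = y₂ := by
      have : g y₁ + (f x₂ - f x₁) = g y₂ := by linarith
      rw [hYdef]; simp only [this, (hG y₂ hy₂).1]
    have h1 : φ x₁ = r (x₁, y₁) - C x₁ := by rw [hφdef]; simp [hY₁]
    have h2 : φ x₂ = r (x₂, y₂) - C x₂ := by rw [hφdef]; simp [hY₂]
    rw [← h1, ← h2, hconst]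
  have key2 : ∀ x₁ ∈ I, ∀ y₁ ∈ J, ∀ x₂ ∈ I, ∀ y₂ ∈ J,
      f x₁ - g y₁ = f x₂ - g y₂ →
      r (x₁, y₁) - C x₁ = r (x₂, y₂) - C x₂ := by
    intro x₁ hx₁ y₁ hy₁ x₂ hx₂ y₂ hy₂ heq
    rcases le_total x₁ x₂ with h | h
    · exact key x₁ hx₁ y₁ hy₁ x₂ hx₂ y₂ hy₂ h heq
    · exact (key x₂ hx₂ y₂ hy₂ x₁ hx₁ y₁ hy₁ h heq.symm).symm
  refine ⟨fun s => if h : ∃ p : ℝ × ℝ, (p.1 ∈ I ∧ p.2 ∈ J) ∧ f p.1 - g p.2 = s then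
    r h.choose - C h.choose.1 else 0, ?_⟩
  intro x hx y hy
  have hex : ∃ p : ℝ × ℝ, (p.1 ∈ I ∧ p.2 ∈ J) ∧ f p.1 - g p.2 = f x - g y :=
    ⟨(x, y), ⟨hx, hy⟩, rfl⟩
  show r (x, y) = (if h : ∃ p : ℝ × ℝ, (p.1 ∈ I ∧ p.2 ∈ J) ∧ f p.1 - g p.2 = f x - g y then
      r h.choose - C h.choose.1 else 0) + C x
  rw [dif_pos hex]
  obtain ⟨⟨hq1, hq2⟩, hq3⟩ := hex.choose_spec
  have hkey := key2 hex.choose.1 hq1 hex.choose.2 hq2 x hx y hy hq3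
  rw [Prod.mk.eta] at hkey
  linarith
end

section
/- Let I, J ⊆ ℝ be open intervals with J connected, set Ω = I × J, and let a₀, a₁, a₂ : Ω → ℝ be smooth functions with a₂ ≠ 0 and ∂_y(a₁/a₂) ≠ 0 everywhere on Ω. Then there exists a differentiable single-variable function A : I → ℝ satisfying a₂(x,y) A'(x) + a₁(x,y) A(x) + a₀(x,y) = 0 for all (x,y) ∈ Ω if and only if the function R := (∂_y(a₀/a₂)) / (∂_y(a₁/a₂)) satisfies ∂_y R = 0 on Ω and ∂_x R + (a₁/a₂) R = a₀/a₂ on Ω; and in this case A is given by A(x) = −R(x,y) (the right-hand side being independent of y). -/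
open Real Set

theorem aux_py_hasDerivAt {f : ℝ × ℝ → ℝ} {Ω : Set (ℝ × ℝ)} (hΩ : IsOpen Ω)
    (hf : ContDiffOn ℝ (⊤ : ℕ∞) f Ω) {p : ℝ × ℝ} (hp : p ∈ Ω) :
    HasDerivAt (fun t => f (p.1, t)) (fderiv ℝ f p (0, 1)) p.2 := by
  have hd : HasFDerivAt f (fderiv ℝ f p) p :=
    ((hf.contDiffAt (hΩ.mem_nhds hp)).differentiableAt (by simp)).hasFDerivAt
  have hγ : HasDerivAt (fun t : ℝ => ((p.1 : ℝ), t)) ((0 : ℝ), (1 : ℝ)) p.2 :=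
    (hasDerivAt_const _ _).prodMk (hasDerivAt_id _)
  have := hd.comp_hasDerivAt p.2 (by simpa using hγ)
  exact this

theorem aux_px_hasDerivAt {f : ℝ × ℝ → ℝ} {Ω : Set (ℝ × ℝ)} (hΩ : IsOpen Ω)
    (hf : ContDiffOn ℝ (⊤ : ℕ∞) f Ω) {p : ℝ × ℝ} (hp : p ∈ Ω) :
    HasDerivAt (fun t => f (t, p.2)) (fderiv ℝ f p (1, 0)) p.1 := by
  have hd : HasFDerivAt f (fderiv ℝ f p) p :=
    ((hf.contDiffAt (hΩ.mem_nhds hp)).differentiableAt (by simp)).hasFDerivAt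
  have hγ : HasDerivAt (fun t : ℝ => (t, (p.2 : ℝ))) ((1 : ℝ), (0 : ℝ)) p.1 :=
    (hasDerivAt_id _).prodMk (hasDerivAt_const _ _)
  have := hd.comp_hasDerivAt p.1 (by simpa using hγ)
  exact this

theorem aux_py_eq {f : ℝ × ℝ → ℝ} {Ω : Set (ℝ × ℝ)} (hΩ : IsOpen Ω)
    (hf : ContDiffOn ℝ (⊤ : ℕ∞) f Ω) {p : ℝ × ℝ} (hp : p ∈ Ω) :
    py f p = fderiv ℝ f p (0, 1) := (aux_py_hasDerivAt hΩ hf hp).deriv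

theorem aux_px_eq {f : ℝ × ℝ → ℝ} {Ω : Set (ℝ × ℝ)} (hΩ : IsOpen Ω)
    (hf : ContDiffOn ℝ (⊤ : ℕ∞) f Ω) {p : ℝ × ℝ} (hp : p ∈ Ω) :
    px f p = fderiv ℝ f p (1, 0) := (aux_px_hasDerivAt hΩ hf hp).deriv

theorem aux_py_hasDerivAt' {f : ℝ × ℝ → ℝ} {Ω : Set (ℝ × ℝ)} (hΩ : IsOpen Ω)
    (hf : ContDiffOn ℝ (⊤ : ℕ∞) f Ω) {p : ℝ × ℝ} (hp : p ∈ Ω) :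
    HasDerivAt (fun t => f (p.1, t)) (py f p) p.2 := by
  rw [aux_py_eq hΩ hf hp]; exact aux_py_hasDerivAt hΩ hf hp

theorem aux_px_hasDerivAt' {f : ℝ × ℝ → ℝ} {Ω : Set (ℝ × ℝ)} (hΩ : IsOpen Ω)
    (hf : ContDiffOn ℝ (⊤ : ℕ∞) f Ω) {p : ℝ × ℝ} (hp : p ∈ Ω) :
    HasDerivAt (fun t => f (t, p.2)) (px f p) p.1 := by
  rw [aux_px_eq hΩ hf hp]; exact aux_px_hasDerivAt hΩ hf hp

theorem aux_contDiffOn_py {f : ℝ × ℝ → ℝ} {Ω : Set (ℝ × ℝ)} (hΩ : IsOpen Ω)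
    (hf : ContDiffOn ℝ (⊤ : ℕ∞) f Ω) :
    ContDiffOn ℝ (⊤ : ℕ∞) (fun p => fderiv ℝ f p (0, 1)) Ω := by
  have h := ((contDiffOn_infty_iff_fderiv_of_isOpen hΩ).1 hf).2
  exact h.clm_apply contDiffOn_const

/-- solvability criterion for the first-order linear ODE
`a₂ A' + a₁ A + a₀ = 0` with two-variable coefficients, and the formula `A(x) = −R(x,y)`
for the solution. -/
theorem linear_ODE_solvability_criterion
    (I J : Set ℝ)
    (hI : IsOpen I) (hIconv : Convex ℝ I)
    (hJ : IsOpen J) (hJconv : Convex ℝ J)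
    (a₀ a₁ a₂ : ℝ × ℝ → ℝ)
    (h0 : ContDiffOn ℝ (⊤ : ℕ∞) a₀ (I ×ˢ J))
    (h1 : ContDiffOn ℝ (⊤ : ℕ∞) a₁ (I ×ˢ J))
    (h2 : ContDiffOn ℝ (⊤ : ℕ∞) a₂ (I ×ˢ J))
    (ha₂ : ∀ p ∈ I ×ˢ J, a₂ p ≠ 0)
    (hne : ∀ p ∈ I ×ˢ J, py (fun z => a₁ z / a₂ z) p ≠ 0)
    (R : ℝ × ℝ → ℝ)
    (hR : ∀ p : ℝ × ℝ,
      R p = py (fun z => a₀ z / a₂ z) p / py (fun z => a₁ z / a₂ z) p) :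
    ((∃ A : ℝ → ℝ, DifferentiableOn ℝ A I ∧
        ∀ p ∈ I ×ˢ J, a₂ p * deriv A p.1 + a₁ p * A p.1 + a₀ p = 0) ↔
      ((∀ p ∈ I ×ˢ J, py R p = 0) ∧
        (∀ p ∈ I ×ˢ J, px R p + a₁ p / a₂ p * R p = a₀ p / a₂ p))) ∧
    (∀ A : ℝ → ℝ, DifferentiableOn ℝ A I →
      (∀ p ∈ I ×ˢ J, a₂ p * deriv A p.1 + a₁ p * A p.1 + a₀ p = 0) →
      ∀ p ∈ I ×ˢ J, A p.1 = -R p) := by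
  have hΩ : IsOpen (I ×ˢ J) := hI.prod hJ
  set b : ℝ × ℝ → ℝ := fun z => a₁ z / a₂ z with hbdef
  set c : ℝ × ℝ → ℝ := fun z => a₀ z / a₂ z with hcdef
  have hb : ContDiffOn ℝ (⊤ : ℕ∞) b (I ×ˢ J) := h1.div h2 ha₂
  have hc : ContDiffOn ℝ (⊤ : ℕ∞) c (I ×ˢ J) := h0.div h2 ha₂
  -- smoothness of R on Ω
  have hRsm : ContDiffOn ℝ (⊤ : ℕ∞) R (I ×ˢ J) := by
    have hden : ∀ p ∈ I ×ˢ J, fderiv ℝ b p (0, 1) ≠ 0 := by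
      intro p hp
      rw [← aux_py_eq hΩ hb hp]
      exact hne p hp
    refine (((aux_contDiffOn_py hΩ hc).div (aux_contDiffOn_py hΩ hb) hden).congr ?_)
    intro p hp
    simp only [Pi.div_apply]
    rw [hR p, aux_py_eq hΩ hc hp, aux_py_eq hΩ hb hp]
  -- Part 2: the formula A = -R
  have key : ∀ A : ℝ → ℝ, DifferentiableOn ℝ A I →
      (∀ p ∈ I ×ˢ J, a₂ p * deriv A p.1 + a₁ p * A p.1 + a₀ p = 0) →
      ∀ p ∈ I ×ˢ J, A p.1 = -R p := by
    intro A hA heq p hp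
    obtain ⟨hx, hy⟩ := hp
    -- the function y ↦ b(x,y) A(x) + c(x,y) is constant (= -A'(x)) on J
    have hconst : ∀ y ∈ J, b (p.1, y) * A p.1 + c (p.1, y) = -deriv A p.1 := by
      intro y hy'
      have h2ne := ha₂ (p.1, y) ⟨hx, hy'⟩
      have he := heq (p.1, y) ⟨hx, hy'⟩
      simp only [hbdef, hcdef]
      field_simp
      nlinarith [he, sq_nonneg (a₂ (p.1, y))]
    -- its derivative at p.2 computed two ways
    have hg : HasDerivAt (fun y => b (p.1, y) * A p.1 + c (p.1, y))
        (py b p * A p.1 + py c p) p.2 := by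
      have h1' := (aux_py_hasDerivAt' hΩ hb (⟨hx, hy⟩ : p ∈ I ×ˢ J)).mul_const (A p.1)
      have h2' := aux_py_hasDerivAt' hΩ hc (⟨hx, hy⟩ : p ∈ I ×ˢ J)
      exact h1'.add h2'
    have hg0 : HasDerivAt (fun y => b (p.1, y) * A p.1 + c (p.1, y)) 0 p.2 := by
      have hev : (fun y => b (p.1, y) * A p.1 + c (p.1, y)) =ᶠ[nhds p.2]
          fun _ => -deriv A p.1 := by
        filter_upwards [hJ.mem_nhds hy] with y hy' using hconst y hy'
      exact (hasDerivAt_const p.2 (-deriv A p.1)).congr_of_eventuallyEq hev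
    have hsum : py b p * A p.1 + py c p = 0 := hg.unique hg0
    have hbne : py b p ≠ 0 := hne p ⟨hx, hy⟩
    rw [hR p]
    field_simp
    nlinarith [hsum]
  refine ⟨⟨?_, ?_⟩, key⟩
  · -- forward direction
    rintro ⟨A, hA, heq⟩
    have hAR := key A hA heq
    constructor
    · intro p hp
      have hev : (fun t => R (p.1, t)) =ᶠ[nhds p.2] fun _ => -A p.1 := by
        filter_upwards [hJ.mem_nhds hp.2] with y hy'
        have := hAR (p.1, y) ⟨hp.1, hy'⟩
        simp at this ⊢
        linarith
      have : py R p = deriv (fun _ : ℝ => -A p.1) p.2 := hev.deriv_eq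
      simpa using this
    · intro p hp
      obtain ⟨hx, hy⟩ := hp
      have hA' : DifferentiableAt ℝ A p.1 := (hA p.1 hx).differentiableAt (hI.mem_nhds hx)
      have hev : (fun t => R (t, p.2)) =ᶠ[nhds p.1] fun t => -A t := by
        filter_upwards [hI.mem_nhds hx] with t ht
        have := hAR (t, p.2) ⟨ht, hy⟩
        simp at this ⊢
        linarith
      have hpx : px R p = -deriv A p.1 := by
        have : px R p = deriv (fun t => -A t) p.1 := hev.deriv_eq
        rw [this, deriv.fun_neg]
      have hRp : R p = -A p.1 := by
        have := hAR p ⟨hx, hy⟩; linarith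
      have he := heq p ⟨hx, hy⟩
      have h2ne := ha₂ p ⟨hx, hy⟩
      rw [hpx, hRp]
      field_simp
      nlinarith [he]
  · -- backward direction
    rintro ⟨hpyR, hpxR⟩
    by_cases hJne : J.Nonempty
    · obtain ⟨y₀, hy₀⟩ := hJne
      refine ⟨fun x => -R (x, y₀), ?_, ?_⟩
      · intro x hx
        exact ((aux_px_hasDerivAt' hΩ hRsm (⟨hx, hy₀⟩ : (x, y₀) ∈ I ×ˢ J)).neg
          ).differentiableAt.differentiableWithinAt
      · intro p hp
        obtain ⟨hx, hy⟩ := hp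
        -- constancy in y: R (x, y) = R (x, y₀) for all x ∈ I, y ∈ J
        have hconst : ∀ x ∈ I, ∀ y ∈ J, R (x, y) = R (x, y₀) := by
          intro x hx' y hy'
          have hdiff : DifferentiableOn ℝ (fun t => R (x, t)) J := fun t ht =>
            (aux_py_hasDerivAt' hΩ hRsm (⟨hx', ht⟩ : (x, t) ∈ I ×ˢ J)
              ).differentiableAt.differentiableWithinAt
          refine hJconv.is_const_of_fderivWithin_eq_zero hdiff ?_ hy' hy₀
          intro t ht
          have hd := aux_py_hasDerivAt' hΩ hRsm (⟨hx', ht⟩ : (x, t) ∈ I ×ˢ J)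
          rw [hpyR (x, t) ⟨hx', ht⟩] at hd
          have : fderivWithin ℝ (fun t => R (x, t)) J t = fderiv ℝ (fun t => R (x, t)) t :=
            fderivWithin_of_isOpen hJ ht
          have h9 : fderiv ℝ (fun s => R (x, s)) t =
              ContinuousLinearMap.smulRight (1 : ℝ →L[ℝ] ℝ) (0 : ℝ) :=
            hd.hasFDerivAt.fderiv
          rw [this, h9]
          ext
          simp
        -- derivative of A
        have hder : deriv (fun x => -R (x, y₀)) p.1 = -px R p := by
          have hd := (aux_px_hasDerivAt' hΩ hRsm (⟨hx, hy₀⟩ : (p.1, y₀) ∈ I ×ˢ J)).neg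
          rw [show deriv (fun x => -R (x, y₀)) p.1 = -px R (p.1, y₀) from hd.deriv]
          congr 1
          have hev : (fun t => R (t, y₀)) =ᶠ[nhds p.1] fun t => R (t, p.2) := by
            filter_upwards [hI.mem_nhds hx] with t ht
            exact (hconst t ht p.2 hy).symm
          exact hev.deriv_eq
        have hval : R (p.1, y₀) = R p := by
          have := hconst p.1 hx p.2 hy
          simpa using this.symm
        have he := hpxR p ⟨hx, hy⟩
        have h2ne := ha₂ p ⟨hx, hy⟩
        have he' : px R p * a₂ p + a₁ p * R p = a₀ p := by
          field_simp at he
          linarith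
        rw [hder]
        show a₂ p * -px R p + a₁ p * -R (p.1, y₀) + a₀ p = 0
        rw [hval]
        nlinarith [he']
    · refine ⟨fun _ => 0, differentiableOn_const 0, ?_⟩
      intro p hp
      exact absurd hp.2 (by simp [not_nonempty_iff_eq_empty.mp hJne])
end
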